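/- An edge e of G is non-rigid with respect to O(G,D_0) (i.e. not oriented the same way in all orientations homologous to D_0) if and only if e is contained in some 0-homologous oriented subgraph of D_0, if and only if for every D ∈ O(G,D_0), e is contained in some 0-homologous oriented subgraph of D. -/
import Mathlib


/-!
Combinatorial framework for flows and homology on a map on an orientable surface.

* A `Multigraph` is a set of edges with a fixed reference orientation (source/target);
  flows on it are elements of ℤ^E.
* A dart is an edge together with a direction of traversal (`true` = forward).
* `charFlow l` is the characteristic flow of a list of darts (a walk):
  #forward traversals − #backward traversals of each edge.
* `beta p q = Σ_e p_e q_{e*}` is the pairing between flows on G and flows on its dual G*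
  (dual flows are indexed by the same edge set via e ↦ e*).
* A `SurfaceMap` records, for each edge, the faces on its left and right, and for each
  face its counterclockwise facial walk; the dual graph G* has the faces as vertices and
  e* oriented from the face on the right of e to the face on the left.
* `GoodFacialWalks` is the defining geometric property of the ccw facial walks:
  the ccw facial walk of a face f uses e forward iff f is on the left of e.
* Two flows are homologous iff their difference lies in the subgroup generated by the
  characteristic flows of the ccw facial walks.
-/

structure Multigraph (V E : Type) where
  src : E → V
  tgt : E → V

namespace Multigraph

variable {V E : Type}

def dtail (M : Multigraph V E) (d : E × Bool) : V := if d.2 then M.src d.1 else M.tgt d.1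

def dhead (M : Multigraph V E) (d : E × Bool) : V := if d.2 then M.tgt d.1 else M.src d.1

/-- A closed walk: a nonempty list of darts, consecutively chained, wrapping around. -/
def IsClosedWalk (M : Multigraph V E) (l : List (E × Bool)) : Prop :=
  l ≠ [] ∧ l.Chain' (fun d d' => M.dhead d = M.dtail d') ∧
    ∀ d ∈ l.head?, ∀ d' ∈ l.getLast?, M.dhead d' = M.dtail d

end Multigraph

/-- Characteristic flow of a walk (list of darts). -/
def charFlow {E : Type} [DecidableEq E] (l : List (E × Bool)) : E → ℤ :=
  fun e => (l.count (e, true) : ℤ) - (l.count (e, false) : ℤ)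

/-- The bilinear pairing β between flows of G and flows of G*. -/
def beta {E : Type} [Fintype E] (p q : E → ℤ) : ℤ := ∑ e, p e * q e

structure SurfaceMap (V E F : Type) where
  G : Multigraph V E
  leftFace : E → F
  rightFace : E → F
  /-- the counterclockwise facial walk of each face -/
  facialWalk : F → List (E × Bool)

namespace SurfaceMap

variable {V E F : Type}

/-- The dual map G*: vertices are the faces of G, and e* goes from the face on the
right of e to the face on the left of e. -/
def dual (M : SurfaceMap V E F) : Multigraph F E := ⟨M.rightFace, M.leftFace⟩

/-- The subgroup 𝔽 of ℤ^E generated by the ccw facial flows. -/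
def FacialSubgroup [DecidableEq E] (M : SurfaceMap V E F) : AddSubgroup (E → ℤ) :=
  AddSubgroup.closure (Set.range fun f => charFlow (M.facialWalk f))

/-- Two flows are homologous iff their difference lies in 𝔽. -/
def Homologous [DecidableEq E] (M : SurfaceMap V E F) (p q : E → ℤ) : Prop :=
  p - q ∈ M.FacialSubgroup

/-- Geometric defining property of the ccw facial walks. -/
def GoodFacialWalks [DecidableEq E] [DecidableEq F] (M : SurfaceMap V E F) : Prop :=
  (∀ f, M.G.IsClosedWalk (M.facialWalk f)) ∧
  ∀ f e, charFlow (M.facialWalk f) e =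
    (if M.leftFace e = f then 1 else 0) - (if M.rightFace e = f then 1 else 0)

end SurfaceMap

def diffFlow {E : Type} (ρ ρ' : E → Bool) : E → ℤ :=
  fun e => if ρ e = ρ' e then 0 else if ρ e then 1 else -1

/--  is non-rigid w.r.t. O(G,D₀): some orientation homologous to D₀ orients 
differently from D₀. -/
def NonRigid {V E F : Type} [DecidableEq E] (M : SurfaceMap V E F) (D0 : E → Bool)
    (e : E) : Prop :=
  ∃ ρ : E → Bool, diffFlow ρ D0 ∈ M.FacialSubgroup ∧ ρ e ≠ D0 e

/-- T is a 0-homologous oriented subgraph of the orientation ρ: a subgraph of G taken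
with ρ's orientation whose characteristic flow lies in the group generated by the ccw
facial flows. -/
def ZeroHomSubgraphOf {V E F : Type} [DecidableEq E] (M : SurfaceMap V E F)
    (ρ : E → Bool) (T : E → ℤ) : Prop :=
  (∀ e, T e = 0 ∨ T e = (if ρ e then 1 else -1)) ∧ T ∈ M.FacialSubgroup

/-!
STATEMENT 17: An edge e of G is non-rigid with respect to O(G,D₀) iff e is contained in
some 0-homologous oriented subgraph of D₀, iff for every D ∈ O(G,D₀), e is contained in
some 0-homologous oriented subgraph of D.
-/

lemma diffFlow_sub {E : Type} (ρ ρ' σ : E → Bool) :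
    diffFlow ρ ρ' = diffFlow ρ σ - diffFlow ρ' σ := by
  funext x
  simp only [diffFlow, Pi.sub_apply]
  cases ρ x <;> cases ρ' x <;> cases σ x <;> simp

lemma diffFlow_vals {E : Type} (ρ σ : E → Bool) (x : E) :
    diffFlow ρ σ x = 0 ∨ diffFlow ρ σ x = (if ρ x then 1 else -1) := by
  simp only [diffFlow]
  cases ρ x <;> cases σ x <;> simp

theorem nonrigid_tfae {V E F : Type} [Fintype E] [DecidableEq E] [DecidableEq F]
    (M : SurfaceMap V E F) (hM : M.GoodFacialWalks)
    (D0 : E → Bool) (e : E) :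
    List.TFAE [
      NonRigid M D0 e,
      ∃ T : E → ℤ, ZeroHomSubgraphOf M D0 T ∧ T e ≠ 0,
      ∀ ρ : E → Bool, diffFlow ρ D0 ∈ M.FacialSubgroup →
        ∃ T : E → ℤ, ZeroHomSubgraphOf M ρ T ∧ T e ≠ 0] := by
  tfae_have 1 → 3 := by
    rintro ⟨ρ', hρ'mem, hρ'e⟩ ρ hρmem
    by_cases h : ρ e = D0 e
    · refine ⟨diffFlow ρ ρ', ⟨diffFlow_vals ρ ρ', ?_⟩, ?_⟩
      · rw [diffFlow_sub ρ ρ' D0]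
        exact sub_mem hρmem hρ'mem
      · simp only [diffFlow]
        have hne : ρ e ≠ ρ' e := by rw [h]; exact fun hc => hρ'e hc.symm
        simp only [if_neg hne]; cases ρ e <;> simp
    · refine ⟨diffFlow ρ D0, ⟨diffFlow_vals ρ D0, hρmem⟩, ?_⟩
      simp only [diffFlow, if_neg h]; cases ρ e <;> simp
  tfae_have 3 → 2 := by
    intro h3
    refine h3 D0 ?_
    have h0 : diffFlow D0 D0 = 0 := by funext x; simp [diffFlow]
    rw [h0]; exact zero_mem _
  tfae_have 2 → 1 := by
    rintro ⟨T, ⟨hTvals, hTmem⟩, hTe⟩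
    refine ⟨fun x => if T x = 0 then D0 x else ¬D0 x, ?_, ?_⟩
    · have hd : diffFlow (fun x => if T x = 0 then D0 x else ¬D0 x) D0 = -T := by
        funext x
        rcases hTvals x with h | h
        · simp [diffFlow, h]
        · have hne : T x ≠ 0 := by rw [h]; cases D0 x <;> simp
          cases hD : D0 x <;> simp [hD] at h <;>
            simp [diffFlow, hne, hD, h]
      rw [hd]; exact neg_mem hTmem
    · simp only [if_neg hTe]; cases D0 e <;> simp
  tfae_finish
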